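/- Single-letterization of the delivery-stage rate (converse step for R_RA). Let ℳ_AR, ℳ_BR, ℳ_RA be finite sets, φ_AR : 𝒳^n → ℳ_AR, φ_BR : 𝒴^n → ℳ_BR, φ_RA : 𝒵^n×ℳ_AR×ℳ_BR → ℳ_RA arbitrary functions, and set M_AR = φ_AR(X^n), M_BR = φ_BR(Y^n), M_RA = φ_RA(Z^n,M_AR,M_BR). Then Σ_{i=1}^n I(Y_i; M_RA | X_i, M_AR, X^{i−1}, Y_{i+1}^n) ≤ H(M_RA | M_AR, X^n) ≤ log₂|ℳ_RA|. In particular, if |ℳ_RA| ≤ 2^{nR_RA}, then Σ_{i=1}^n I(Y_i; V_{2,i} | X_i, U_{1,i}) ≤ nR_RA, where U_{1,i} = (M_AR, X^{i−1}, Y_{i+1}^n) and V_{2,i} = M_RA. -/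

import Mathlib

open scoped BigOperators

noncomputable section

namespace IRSC

attribute [local instance] Classical.propDecidable

/-- A bundled finite alphabet. -/
structure FinAlph where
  carrier : Type
  [fin : Fintype carrier]

attribute [instance] FinAlph.fin

section Basic

variable {Ω α β γ : Type*} [Fintype Ω]

/-- `μ` is a probability mass function on the finite type `Ω`. -/
def IsPMF (μ : Ω → ℝ) : Prop := (∀ ω, 0 ≤ μ ω) ∧ ∑ ω, μ ω = 1

/-- The probability that the random variable `f` takes the value `a` under `μ`. -/
def probOf (μ : Ω → ℝ) (f : Ω → α) (a : α) : ℝ := ∑ ω, if f ω = a then μ ω else 0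

/-- The expectation of the real-valued random variable `g` under `μ`. -/
def expect (μ : Ω → ℝ) (g : Ω → ℝ) : ℝ := ∑ ω, μ ω * g ω

/-- The Shannon entropy (base 2) `H(f)` of a random variable `f` under `μ`. -/
def entropy [Fintype α] (μ : Ω → ℝ) (f : Ω → α) : ℝ :=
  -∑ a, probOf μ f a * Real.logb 2 (probOf μ f a)

/-- The conditional entropy `H(f | g)` under `μ`. -/
def condEntropy [Fintype α] [Fintype β] (μ : Ω → ℝ) (f : Ω → α) (g : Ω → β) : ℝ :=
  entropy μ (fun ω => (f ω, g ω)) - entropy μ g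

/-- The conditional mutual information `I(f ; g | h)` under `μ`. -/
def condMI [Fintype α] [Fintype β] [Fintype γ]
    (μ : Ω → ℝ) (f : Ω → α) (g : Ω → β) (h : Ω → γ) : ℝ :=
  condEntropy μ f h + condEntropy μ g h - condEntropy μ (fun ω => (f ω, g ω)) h

/-- `MarkovChain μ f g h` says that `f − g − h` forms a Markov chain under `μ`, i.e.
`f` and `h` are conditionally independent given `g`. -/
def MarkovChain (μ : Ω → ℝ) (f : Ω → α) (g : Ω → β) (h : Ω → γ) : Prop :=
  ∀ a b c,
    probOf μ (fun ω => (f ω, g ω, h ω)) (a, b, c) * probOf μ g b =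
      probOf μ (fun ω => (f ω, g ω)) (a, b) * probOf μ (fun ω => (g ω, h ω)) (b, c)

end Basic

/-- The i.i.d. distribution of `n` copies of `p`. -/
def iid {W : Type*} [Fintype W] (p : W → ℝ) (n : ℕ) : (Fin n → W) → ℝ :=
  fun w => ∏ i, p (w i)

/-- The past `(x_1, …, x_{i-1})` of a sequence `x` relative to position `i`. -/
def past {n : ℕ} {α : Type*} (i : Fin n) (x : Fin n → α) : {j : Fin n // j < i} → α :=
  fun j => x j.1

/-- The future `(x_{i+1}, …, x_n)` of a sequence `x` relative to position `i`. -/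
def fut {n : ℕ} {α : Type*} (i : Fin n) (x : Fin n → α) : {j : Fin n // i < j} → α :=
  fun j => x j.1

section Extra
variable {Ω α β γ : Type*} [Fintype Ω]

section Lemmas
variable {μ : Ω → ℝ}

lemma probOf_nonneg (h0 : ∀ ω, 0 ≤ μ ω) (f : Ω → α) (a : α) : 0 ≤ probOf μ f a :=
  Finset.sum_nonneg fun ω _ => by by_cases h : f ω = a <;> simp [probOf, h, h0 ω]

lemma probOf_congr {f : Ω → α} {g : Ω → β} {a : α} {b : β}
    (h : ∀ ω, f ω = a ↔ g ω = b) : probOf μ f a = probOf μ g b := by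
  refine Finset.sum_congr rfl fun ω _ => ?_
  by_cases hf : f ω = a
  · rw [if_pos hf, if_pos ((h ω).1 hf)]
  · rw [if_neg hf, if_neg (fun hg => hf ((h ω).2 hg))]

lemma self_le_probOf (h0 : ∀ ω, 0 ≤ μ ω) (f : Ω → α) (ω : Ω) : μ ω ≤ probOf μ f (f ω) := by
  have := Finset.single_le_sum (f := fun ω' => if f ω' = f ω then μ ω' else 0)
    (fun ω' _ => by by_cases h : f ω' = f ω <;> simp [h, h0 ω']) (Finset.mem_univ ω)
  simpa [probOf] using this

lemma probOf_mono (h0 : ∀ ω, 0 ≤ μ ω) {f : Ω → α} {g : Ω → β} {a : α} {b : β}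
    (h : ∀ ω, f ω = a → g ω = b) : probOf μ f a ≤ probOf μ g b :=
  Finset.sum_le_sum fun ω _ => by
    by_cases hf : f ω = a
    · rw [if_pos hf, if_pos (h ω hf)]
    · rw [if_neg hf]; by_cases hg : g ω = b <;> simp [hg, h0 ω]

lemma sum_probOf_mul [Fintype α] (f : Ω → α) (k : α → ℝ) :
    ∑ a, probOf μ f a * k a = ∑ ω, μ ω * k (f ω) := by
  unfold probOf
  simp_rw [Finset.sum_mul, ite_mul, zero_mul]
  rw [Finset.sum_comm]
  refine Finset.sum_congr rfl fun ω _ => ?_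
  simp_rw [eq_comm (a := f ω)]
  rw [Finset.sum_ite_eq' Finset.univ (f ω) (fun a => μ ω * k a)]
  simp

lemma sum_probOf (f : Ω → α) [Fintype α] : ∑ a, probOf μ f a = ∑ ω, μ ω := by
  have := sum_probOf_mul (μ := μ) f (fun _ => 1)
  simpa using this

lemma marg_probOf [Fintype α] (f : Ω → α) (g : Ω → β) (b : β) :
    ∑ a, probOf μ (fun ω => (f ω, g ω)) (a, b) = probOf μ g b := by
  unfold probOf
  rw [Finset.sum_comm]
  refine Finset.sum_congr rfl fun ω _ => ?_
  by_cases hg : g ω = b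
  · simp [Prod.ext_iff, hg]
  · simp [Prod.ext_iff, hg]

lemma entropy_eq_sum_omega [Fintype α] (f : Ω → α) :
    entropy μ f = -∑ ω, μ ω * Real.logb 2 (probOf μ f (f ω)) := by
  unfold entropy
  rw [sum_probOf_mul f (fun a => Real.logb 2 (probOf μ f a))]

lemma entropy_congr [Fintype α] [Fintype β] {f : Ω → α} {g : Ω → β}
    (h : ∀ ω ω', f ω = f ω' ↔ g ω = g ω') : entropy μ f = entropy μ g := by
  rw [entropy_eq_sum_omega, entropy_eq_sum_omega]
  refine congrArg _ (Finset.sum_congr rfl fun ω _ => ?_)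
  rw [probOf_congr (fun ω' => h ω' ω)]

lemma condMI_eq [Fintype α] [Fintype β] [Fintype γ] (f : Ω → α) (g : Ω → β) (h : Ω → γ) :
    condMI μ f g h =
      entropy μ (fun ω => (f ω, h ω)) + entropy μ (fun ω => (g ω, h ω))
        - entropy μ (fun ω => (f ω, g ω, h ω)) - entropy μ h := by
  unfold condMI condEntropy
  have e : entropy μ (fun ω => ((f ω, g ω), h ω)) = entropy μ (fun ω => (f ω, g ω, h ω)) :=
    entropy_congr (by intro ω ω'; simp only [Prod.ext_iff]; tauto)
  rw [e]; ring

section Core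
variable [Fintype α] [Fintype β] [Fintype γ] {f : Ω → α} {g : Ω → β} {h : Ω → γ}

lemma condEntropy_nonneg (h0 : ∀ ω, 0 ≤ μ ω) (f : Ω → α) (g : Ω → β) :
    0 ≤ condEntropy μ f g := by
  unfold condEntropy
  rw [entropy_eq_sum_omega, entropy_eq_sum_omega]
  rw [neg_sub_neg, ← Finset.sum_sub_distrib]
  refine Finset.sum_nonneg fun ω _ => ?_
  rcases eq_or_lt_of_le (h0 ω) with hz | hpos
  · simp [← hz]
  · rw [← mul_sub]
    refine mul_nonneg (h0 ω) ?_
    rw [sub_nonneg]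
    have hP : 0 < probOf μ (fun ω => (f ω, g ω)) (f ω, g ω) :=
      lt_of_lt_of_le hpos (self_le_probOf h0 _ ω)
    refine Real.logb_le_logb_of_le one_lt_two hP ?_
    exact probOf_mono h0 fun ω' hh => by
      simp only [Prod.mk.injEq] at hh; exact hh.2

lemma condMI_nonneg (hμ : IsPMF μ) (f : Ω → α) (g : Ω → β) (h : Ω → γ) :
    0 ≤ condMI μ f g h := by
  obtain ⟨h0, h1⟩ := hμ
  set P : α × β × γ → ℝ := probOf μ (fun ω => (f ω, g ω, h ω)) with hP
  set s : α × γ → ℝ := probOf μ (fun ω => (f ω, h ω)) with hs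
  set t : β × γ → ℝ := probOf μ (fun ω => (g ω, h ω)) with ht
  set r : γ → ℝ := probOf μ h with hr
  set k : α × β × γ → ℝ := fun v => s (v.1, v.2.2) * t v.2 / (P v * r v.2.2) with hk
  have hlog2 : (0:ℝ) < Real.log 2 := Real.log_pos one_lt_two
  -- pointwise bound
  have point : ∀ ω : Ω,
      μ ω * Real.logb 2 (s (f ω, h ω)) + μ ω * Real.logb 2 (t (g ω, h ω))
        - μ ω * Real.logb 2 (P (f ω, g ω, h ω)) - μ ω * Real.logb 2 (r (h ω))
      ≤ (μ ω * k (f ω, g ω, h ω) - μ ω) / Real.log 2 := by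
    intro ω
    rcases eq_or_lt_of_le (h0 ω) with hz | hpos
    · simp [← hz]
    · have hPp : 0 < P (f ω, g ω, h ω) := lt_of_lt_of_le hpos (self_le_probOf h0 _ ω)
      have hsp : 0 < s (f ω, h ω) := lt_of_lt_of_le hPp (probOf_mono h0 fun ω' hh => by
        simp only [Prod.mk.injEq] at hh ⊢; exact ⟨hh.1, hh.2.2⟩)
      have htp : 0 < t (g ω, h ω) := lt_of_lt_of_le hPp (probOf_mono h0 fun ω' hh => by
        simp only [Prod.mk.injEq] at hh ⊢; exact hh.2)
      have hrp : 0 < r (h ω) := lt_of_lt_of_le hPp (probOf_mono h0 fun ω' hh => by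
        simp only [Prod.mk.injEq] at hh; exact hh.2.2)
      have hx : 0 < k (f ω, g ω, h ω) := by
        rw [hk]; positivity
      have hlogeq : Real.logb 2 (s (f ω, h ω)) + Real.logb 2 (t (g ω, h ω))
          - Real.logb 2 (P (f ω, g ω, h ω)) - Real.logb 2 (r (h ω))
          = Real.logb 2 (k (f ω, g ω, h ω)) := by
        rw [hk]
        rw [Real.logb_div (by positivity) (by positivity),
          Real.logb_mul hsp.ne' htp.ne', Real.logb_mul hPp.ne' hrp.ne']
        ring
      have hle : Real.logb 2 (k (f ω, g ω, h ω)) ≤ (k (f ω, g ω, h ω) - 1) / Real.log 2 := by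
        rw [Real.logb]
        exact div_le_div_of_nonneg_right (Real.log_le_sub_one_of_pos hx) hlog2.le
      calc μ ω * Real.logb 2 (s (f ω, h ω)) + μ ω * Real.logb 2 (t (g ω, h ω))
            - μ ω * Real.logb 2 (P (f ω, g ω, h ω)) - μ ω * Real.logb 2 (r (h ω))
          = μ ω * Real.logb 2 (k (f ω, g ω, h ω)) := by rw [← hlogeq]; ring
        _ ≤ μ ω * ((k (f ω, g ω, h ω) - 1) / Real.log 2) :=
            mul_le_mul_of_nonneg_left hle hpos.le
        _ = (μ ω * k (f ω, g ω, h ω) - μ ω) / Real.log 2 := by ring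
  -- sum of the upper bounds is ≤ 0
  have hPk : ∑ ω, μ ω * k (f ω, g ω, h ω) ≤ 1 := by
    rw [← sum_probOf_mul (fun ω => (f ω, g ω, h ω)) k]
    have hb : ∀ v : α × β × γ, P v * k v ≤ s (v.1, v.2.2) * t v.2 / r v.2.2 := by
      intro v
      by_cases hPz : P v = 0
      · rw [hPz, zero_mul]
        have := probOf_nonneg h0 (fun ω => (f ω, h ω)) (v.1, v.2.2)
        have := probOf_nonneg h0 (fun ω => (g ω, h ω)) v.2
        have := probOf_nonneg h0 h v.2.2
        positivity
      · rw [hk]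
        rw [mul_div_assoc']
        rw [show P v * (s (v.1, v.2.2) * t v.2) = (s (v.1, v.2.2) * t v.2) * P v by ring,
          show P v * r v.2.2 = r v.2.2 * P v by ring,
          mul_div_mul_right _ _ hPz]
    refine (Finset.sum_le_sum fun v _ => hb v).trans ?_
    have hsum : ∑ v : α × β × γ, s (v.1, v.2.2) * t v.2 / r v.2.2
        = ∑ c, r c * r c / r c := by
      rw [Fintype.sum_prod_type]
      simp_rw [Fintype.sum_prod_type]
      calc ∑ a, ∑ b, ∑ c, s (a, c) * t (b, c) / r c
          = ∑ a, ∑ c, ∑ b, s (a, c) * t (b, c) / r c :=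
            Finset.sum_congr rfl fun _ _ => Finset.sum_comm
        _ = ∑ c, ∑ a, ∑ b, s (a, c) * t (b, c) / r c := Finset.sum_comm
        _ = ∑ c, r c * r c / r c := by
            refine Finset.sum_congr rfl fun c _ => ?_
            simp_rw [← Finset.sum_div, ← Finset.mul_sum, ← Finset.sum_mul]
            rw [marg_probOf f h c, marg_probOf g h c]
    rw [hsum]
    have hrsum : ∑ c, r c = 1 := by rw [hr, sum_probOf h, h1]
    refine le_trans (Finset.sum_le_sum fun c _ => ?_) hrsum.le
    by_cases hrz : r c = 0
    · simp [hrz]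
    · rw [mul_div_assoc, div_self hrz, mul_one]
  -- assemble
  have key : ∑ ω, (μ ω * Real.logb 2 (s (f ω, h ω)) + μ ω * Real.logb 2 (t (g ω, h ω))
      - μ ω * Real.logb 2 (P (f ω, g ω, h ω)) - μ ω * Real.logb 2 (r (h ω))) ≤ 0 := by
    refine le_trans (Finset.sum_le_sum fun ω _ => point ω) ?_
    have e : ∑ ω, (μ ω * k (f ω, g ω, h ω) - μ ω) / Real.log 2
        = ((∑ ω, μ ω * k (f ω, g ω, h ω)) - 1) / Real.log 2 := by
      rw [← Finset.sum_div, Finset.sum_sub_distrib, h1]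
    rw [e]
    exact div_nonpos_of_nonpos_of_nonneg (by linarith) hlog2.le
  have split : ∑ ω, (μ ω * Real.logb 2 (s (f ω, h ω)) + μ ω * Real.logb 2 (t (g ω, h ω))
      - μ ω * Real.logb 2 (P (f ω, g ω, h ω)) - μ ω * Real.logb 2 (r (h ω)))
      = (∑ ω, μ ω * Real.logb 2 (s (f ω, h ω))) + (∑ ω, μ ω * Real.logb 2 (t (g ω, h ω)))
      - (∑ ω, μ ω * Real.logb 2 (P (f ω, g ω, h ω))) - (∑ ω, μ ω * Real.logb 2 (r (h ω))) := by
    rw [Finset.sum_sub_distrib, Finset.sum_sub_distrib, Finset.sum_add_distrib]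
  rw [condMI_eq, entropy_eq_sum_omega, entropy_eq_sum_omega, entropy_eq_sum_omega,
    entropy_eq_sum_omega, ← hs, ← ht, ← hP, ← hr]
  rw [split] at key
  linarith [key]

lemma condMI_zero_of_markov (hμ : IsPMF μ) (f : Ω → α) (g : Ω → β) (h : Ω → γ)
    (hfact : ∀ a b c,
      probOf μ (fun ω => (f ω, g ω, h ω)) (a, b, c) * probOf μ h c =
        probOf μ (fun ω => (f ω, h ω)) (a, c) * probOf μ (fun ω => (g ω, h ω)) (b, c)) :
    condMI μ f g h = 0 := by
  obtain ⟨h0, h1⟩ := hμ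
  set P : α × β × γ → ℝ := probOf μ (fun ω => (f ω, g ω, h ω)) with hP
  set s : α × γ → ℝ := probOf μ (fun ω => (f ω, h ω)) with hs
  set t : β × γ → ℝ := probOf μ (fun ω => (g ω, h ω)) with ht
  set r : γ → ℝ := probOf μ h with hr
  have point : ∀ ω : Ω,
      μ ω * Real.logb 2 (s (f ω, h ω)) + μ ω * Real.logb 2 (t (g ω, h ω))
        - μ ω * Real.logb 2 (P (f ω, g ω, h ω)) - μ ω * Real.logb 2 (r (h ω)) = 0 := by
    intro ω
    rcases eq_or_lt_of_le (h0 ω) with hz | hpos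
    · simp [← hz]
    · have hPp : 0 < P (f ω, g ω, h ω) := lt_of_lt_of_le hpos (self_le_probOf h0 _ ω)
      have hrp : 0 < r (h ω) := lt_of_lt_of_le hPp (probOf_mono h0 fun ω' hh => by
        simp only [Prod.mk.injEq] at hh; exact hh.2.2)
      have hfac := hfact (f ω) (g ω) (h ω)
      have hst : 0 < s (f ω, h ω) * t (g ω, h ω) := by
        rw [← hfac]; positivity
      have hsp : 0 < s (f ω, h ω) :=
        lt_of_le_of_ne (probOf_nonneg h0 _ _) (fun hc => by
          rw [← hc] at hst; simp at hst)
      have htp : 0 < t (g ω, h ω) :=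
        lt_of_le_of_ne (probOf_nonneg h0 _ _) (fun hc => by
          rw [← hc] at hst; simp at hst)
      have : Real.logb 2 (P (f ω, g ω, h ω)) + Real.logb 2 (r (h ω))
          = Real.logb 2 (s (f ω, h ω)) + Real.logb 2 (t (g ω, h ω)) := by
        rw [← Real.logb_mul hPp.ne' hrp.ne', ← Real.logb_mul hsp.ne' htp.ne', hfac]
      nlinarith [this]
  have key : ∑ ω, (μ ω * Real.logb 2 (s (f ω, h ω)) + μ ω * Real.logb 2 (t (g ω, h ω))
      - μ ω * Real.logb 2 (P (f ω, g ω, h ω)) - μ ω * Real.logb 2 (r (h ω))) = 0 :=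
    Finset.sum_eq_zero fun ω _ => point ω
  have split : ∑ ω, (μ ω * Real.logb 2 (s (f ω, h ω)) + μ ω * Real.logb 2 (t (g ω, h ω))
      - μ ω * Real.logb 2 (P (f ω, g ω, h ω)) - μ ω * Real.logb 2 (r (h ω)))
      = (∑ ω, μ ω * Real.logb 2 (s (f ω, h ω))) + (∑ ω, μ ω * Real.logb 2 (t (g ω, h ω)))
      - (∑ ω, μ ω * Real.logb 2 (P (f ω, g ω, h ω))) - (∑ ω, μ ω * Real.logb 2 (r (h ω))) := by
    rw [Finset.sum_sub_distrib, Finset.sum_sub_distrib, Finset.sum_add_distrib]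
  rw [condMI_eq, entropy_eq_sum_omega, entropy_eq_sum_omega, entropy_eq_sum_omega,
    entropy_eq_sum_omega, ← hs, ← ht, ← hP, ← hr]
  rw [split] at key
  linarith [key]

lemma entropy_le_logb_card (hμ : IsPMF μ) (f : Ω → α) [Nonempty α] :
    entropy μ f ≤ Real.logb 2 (Fintype.card α) := by
  obtain ⟨h0, h1⟩ := hμ
  have hN : (0:ℝ) < Fintype.card α := by
    have := Fintype.card_pos (α := α); exact_mod_cast this
  have hlog2 : (0:ℝ) < Real.log 2 := Real.log_pos one_lt_two
  set q : α → ℝ := probOf μ f with hq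
  have hqsum : ∑ a, q a = 1 := by rw [hq, sum_probOf f, h1]
  have point : ∀ a : α, -(q a * Real.logb 2 (q a)) - q a * Real.logb 2 (Fintype.card α)
      ≤ ((Fintype.card α : ℝ)⁻¹ - q a) / Real.log 2 := by
    intro a
    rcases eq_or_lt_of_le (probOf_nonneg h0 f a) with hz | hpos
    · rw [hq, ← hz]
      simp
      positivity
    · have hx : 0 < (q a * Fintype.card α)⁻¹ := by positivity
      have hlogeq : -(q a * Real.logb 2 (q a)) - q a * Real.logb 2 (Fintype.card α)
          = q a * Real.logb 2 ((q a * Fintype.card α)⁻¹) := by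
        rw [Real.logb_inv, Real.logb_mul hpos.ne' hN.ne']
        ring
      rw [hlogeq]
      have hle : Real.logb 2 ((q a * Fintype.card α)⁻¹)
          ≤ ((q a * Fintype.card α)⁻¹ - 1) / Real.log 2 := by
        rw [Real.logb]
        exact div_le_div_of_nonneg_right (Real.log_le_sub_one_of_pos hx) hlog2.le
      calc q a * Real.logb 2 ((q a * Fintype.card α)⁻¹)
          ≤ q a * (((q a * Fintype.card α)⁻¹ - 1) / Real.log 2) :=
            mul_le_mul_of_nonneg_left hle hpos.le
        _ = ((Fintype.card α : ℝ)⁻¹ - q a) / Real.log 2 := by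
            field_simp
            rw [mul_sub, mul_one_div_cancel (show q a ≠ 0 from hpos.ne')]
  have hsum := Finset.sum_le_sum (fun a (_ : a ∈ Finset.univ) => point a)
  have e1 : ∑ a, (-(q a * Real.logb 2 (q a)) - q a * Real.logb 2 (Fintype.card α))
      = entropy μ f - Real.logb 2 (Fintype.card α) := by
    rw [Finset.sum_sub_distrib, Finset.sum_neg_distrib, ← Finset.sum_mul, hqsum, one_mul]
    rfl
  have e2 : ∑ a : α, ((Fintype.card α : ℝ)⁻¹ - q a) / Real.log 2 = 0 := by
    rw [← Finset.sum_div, Finset.sum_sub_distrib, hqsum, Finset.sum_const, Finset.card_univ,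
      nsmul_eq_mul, mul_inv_cancel₀ hN.ne']
    simp
  rw [e1, e2] at hsum
  linarith

lemma condEntropy_le_entropy (hμ : IsPMF μ) (f : Ω → α) (g : Ω → β) :
    condEntropy μ f g ≤ entropy μ f := by
  have hnn := condMI_nonneg hμ f g (fun _ : Ω => ())
  rw [condMI_eq] at hnn
  have e1 : entropy μ (fun ω => (f ω, ())) = entropy μ f :=
    entropy_congr (by intro ω ω'; simp [Prod.ext_iff])
  have e2 : entropy μ (fun ω => (g ω, ())) = entropy μ g :=
    entropy_congr (by intro ω ω'; simp [Prod.ext_iff])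
  have e3 : entropy μ (fun ω => (f ω, g ω, ())) = entropy μ (fun ω => (f ω, g ω)) :=
    entropy_congr (by intro ω ω'; simp [Prod.ext_iff])
  have e4 : entropy μ (fun _ : Ω => ()) = 0 := by
    unfold entropy probOf
    simp [hμ.2]
  rw [e1, e2, e3, e4] at hnn
  unfold condEntropy
  linarith

lemma condMI_chain (f : Ω → α) (g₁ : Ω → β) (g₂ : Ω → γ) {δ : Type*} [Fintype δ] (h : Ω → δ) :
    condMI μ f (fun ω => (g₁ ω, g₂ ω)) h
      = condMI μ f g₁ h + condMI μ f g₂ (fun ω => (g₁ ω, h ω)) := by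
  rw [condMI_eq, condMI_eq, condMI_eq]
  have e2 : entropy μ (fun ω => (g₂ ω, (g₁ ω, h ω))) = entropy μ (fun ω => ((g₁ ω, g₂ ω), h ω)) :=
    entropy_congr (by intro ω ω'; simp only [Prod.ext_iff]; tauto)
  have e3 : entropy μ (fun ω => (f ω, g₂ ω, (g₁ ω, h ω)))
      = entropy μ (fun ω => (f ω, (g₁ ω, g₂ ω), h ω)) :=
    entropy_congr (by intro ω ω'; simp only [Prod.ext_iff]; tauto)
  rw [e2, e3]
  ring

lemma condMI_eq_diff (f : Ω → α) (g : Ω → β) (h : Ω → γ) :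
    condMI μ f g h = condEntropy μ g h - condEntropy μ g (fun ω => (f ω, h ω)) := by
  rw [condMI_eq]
  unfold condEntropy
  have e1 : entropy μ (fun ω => (g ω, (f ω, h ω))) = entropy μ (fun ω => (f ω, g ω, h ω)) :=
    entropy_congr (by intro ω ω'; simp only [Prod.ext_iff]; tauto)
  rw [e1]
  ring

lemma condMI_zero_of_determined (f : Ω → α) (g : Ω → β) (h : Ω → γ)
    (hdet : ∀ ω ω', h ω = h ω' → g ω = g ω') : condMI μ f g h = 0 := by
  rw [condMI_eq]
  have e1 : entropy μ (fun ω => (g ω, h ω)) = entropy μ h :=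
    entropy_congr (by intro ω ω'; simp only [Prod.ext_iff]
                      exact ⟨fun hh => hh.2, fun hh => ⟨hdet _ _ hh, hh⟩⟩)
  have e2 : entropy μ (fun ω => (f ω, g ω, h ω)) = entropy μ (fun ω => (f ω, h ω)) :=
    entropy_congr (by intro ω ω'; simp only [Prod.ext_iff]
                      exact ⟨fun hh => ⟨hh.1, hh.2.2⟩, fun hh => ⟨hh.1, hdet _ _ hh.2, hh.2⟩⟩)
  rw [e1, e2]
  ring

lemma condEntropy_congr {δ : Type*} [Fintype δ] {f : Ω → α} {g : Ω → β} {g' : Ω → δ}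
    (hg : ∀ ω ω', g ω = g ω' ↔ g' ω = g' ω') : condEntropy μ f g = condEntropy μ f g' := by
  unfold condEntropy
  rw [entropy_congr hg, entropy_congr (f := fun ω => (f ω, g ω)) (g := fun ω => (f ω, g' ω))
    (by intro ω ω'; simp only [Prod.ext_iff]; rw [hg ω ω'])]

lemma condMI_congr {α' β' γ' : Type*} [Fintype α'] [Fintype β'] [Fintype γ']
    {f : Ω → α} {g : Ω → β} {h : Ω → γ} {f' : Ω → α'} {g' : Ω → β'} {h' : Ω → γ'}
    (hf : ∀ ω ω', f ω = f ω' ↔ f' ω = f' ω')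
    (hg : ∀ ω ω', g ω = g ω' ↔ g' ω = g' ω')
    (hh : ∀ ω ω', h ω = h ω' ↔ h' ω = h' ω') :
    condMI μ f g h = condMI μ f' g' h' := by
  rw [condMI_eq, condMI_eq]
  rw [entropy_congr (f := fun ω => (f ω, h ω)) (g := fun ω => (f' ω, h' ω))
      (by intro ω ω'; simp only [Prod.ext_iff]; rw [hf ω ω', hh ω ω']),
    entropy_congr (f := fun ω => (g ω, h ω)) (g := fun ω => (g' ω, h' ω))
      (by intro ω ω'; simp only [Prod.ext_iff]; rw [hg ω ω', hh ω ω']),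
    entropy_congr (f := fun ω => (f ω, g ω, h ω)) (g := fun ω => (f' ω, g' ω, h' ω))
      (by intro ω ω'; simp only [Prod.ext_iff]; rw [hf ω ω', hg ω ω', hh ω ω']),
    entropy_congr (f := h) (g := h') hh]

end Core
end Lemmas

section IID
variable {W : Type*} [Fintype W] {n : ℕ} {p : W → ℝ}

lemma sum_pi_prod {ι : Type*} [Fintype ι] [DecidableEq ι] (hp : IsPMF p) :
    ∑ w : ι → W, ∏ j, p (w j) = 1 := by
  rw [← Fintype.piFinset_univ, ← Finset.prod_univ_sum]
  simp [hp.2]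

lemma isPMF_iid (hp : IsPMF p) (n : ℕ) : IsPMF (iid p n) := by
  constructor
  · intro w
    exact Finset.prod_nonneg fun i _ => hp.1 _
  · unfold iid
    exact sum_pi_prod hp

lemma sum_iid_split (q : Fin n → Prop) [DecidablePred q]
    (K : ({j : Fin n // q j} → W) → ({j : Fin n // ¬ q j} → W) → ℝ) :
    ∑ w : Fin n → W, (∏ j, p (w j)) * K (fun j => w j.1) (fun j => w j.1)
      = ∑ w1 : ({j : Fin n // q j} → W), ∑ w2 : ({j : Fin n // ¬ q j} → W),
          ((∏ j, p (w1 j)) * (∏ j, p (w2 j))) * K w1 w2 := by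
  classical
  rw [← Equiv.sum_comp (Equiv.piEquivPiSubtypeProd q (fun _ => W)).symm
    (fun w : Fin n → W => (∏ j, p (w j)) * K (fun j => w j.1) (fun j => w j.1))]
  rw [Fintype.sum_prod_type]
  refine Finset.sum_congr rfl fun w1 _ => Finset.sum_congr rfl fun w2 _ => ?_
  have hr1 : (fun j : {j : Fin n // q j} =>
      (Equiv.piEquivPiSubtypeProd q (fun _ => W)).symm (w1, w2) j.1) = w1 := by
    funext j
    simp [Equiv.piEquivPiSubtypeProd, j.2]
  have hr2 : (fun j : {j : Fin n // ¬ q j} =>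
      (Equiv.piEquivPiSubtypeProd q (fun _ => W)).symm (w1, w2) j.1) = w2 := by
    funext j
    simp [Equiv.piEquivPiSubtypeProd, j.2]
  have hprod : ∏ j, p ((Equiv.piEquivPiSubtypeProd q (fun _ => W)).symm (w1, w2) j)
      = (∏ j, p (w1 j)) * (∏ j, p (w2 j)) := by
    rw [← Fintype.prod_subtype_mul_prod_subtype q
      (fun j => p ((Equiv.piEquivPiSubtypeProd q (fun _ => W)).symm (w1, w2) j))]
    refine congrArg₂ (· * ·) ?_ ?_
    · exact Finset.prod_congr rfl fun j _ => congrArg p (congrFun hr1 j)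
    · exact Finset.prod_congr rfl fun j _ => congrArg p (congrFun hr2 j)
  rw [hr1, hr2, hprod]

lemma probOf_iid_block (hp : IsPMF p) (q : Fin n → Prop) [DecidablePred q] {α β : Type*}
    (U : ({j : Fin n // q j} → W) → α) (V : ({j : Fin n // ¬ q j} → W) → β) (a : α) (b : β) :
    probOf (iid p n) (fun w => (U (fun j => w j.1), V (fun j => w j.1))) (a, b)
      = probOf (iid p n) (fun w => U (fun j => w j.1)) a *
        probOf (iid p n) (fun w => V (fun j => w j.1)) b := by
  classical
  have ekey : ∀ (K : ({j : Fin n // q j} → W) → ({j : Fin n // ¬ q j} → W) → ℝ),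
      ∑ w : Fin n → W, (iid p n w) * K (fun j => w j.1) (fun j => w j.1)
        = ∑ w1 : ({j : Fin n // q j} → W), ∑ w2 : ({j : Fin n // ¬ q j} → W),
            ((∏ j, p (w1 j)) * (∏ j, p (w2 j))) * K w1 w2 :=
    fun K => sum_iid_split q K
  have h1 : probOf (iid p n) (fun w => (U (fun j => w j.1), V (fun j => w j.1))) (a, b)
      = ∑ w1 : ({j : Fin n // q j} → W), ∑ w2 : ({j : Fin n // ¬ q j} → W),
          ((∏ j, p (w1 j)) * (∏ j, p (w2 j))) *
          ((if U w1 = a then (1:ℝ) else 0) * (if V w2 = b then (1:ℝ) else 0)) := by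
    rw [← ekey]
    unfold probOf
    refine Finset.sum_congr rfl fun w _ => ?_
    by_cases hU : U (fun j => w j.1) = a <;> by_cases hV : V (fun j => w j.1) = b <;>
      simp [Prod.ext_iff, hU, hV]
  have h2 : probOf (iid p n) (fun w => U (fun j => w j.1)) a
      = ∑ w1 : ({j : Fin n // q j} → W), ∑ w2 : ({j : Fin n // ¬ q j} → W),
          ((∏ j, p (w1 j)) * (∏ j, p (w2 j))) *
          ((if U w1 = a then (1:ℝ) else 0) * 1) := by
    rw [← ekey]
    unfold probOf
    refine Finset.sum_congr rfl fun w _ => ?_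
    by_cases hU : U (fun j => w j.1) = a <;> simp [hU]
  have h3 : probOf (iid p n) (fun w => V (fun j => w j.1)) b
      = ∑ w1 : ({j : Fin n // q j} → W), ∑ w2 : ({j : Fin n // ¬ q j} → W),
          ((∏ j, p (w1 j)) * (∏ j, p (w2 j))) *
          (1 * (if V w2 = b then (1:ℝ) else 0)) := by
    rw [← ekey]
    unfold probOf
    refine Finset.sum_congr rfl fun w _ => ?_
    by_cases hV : V (fun j => w j.1) = b <;> simp [hV]
  have T1 : ∑ w1 : ({j : Fin n // q j} → W), ∏ j, p (w1 j) = 1 := sum_pi_prod hp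
  have T2 : ∑ w2 : ({j : Fin n // ¬ q j} → W), ∏ j, p (w2 j) = 1 := sum_pi_prod hp
  rw [h1, h2, h3]
  have fact : ∀ (k1 : ({j : Fin n // q j} → W) → ℝ) (k2 : ({j : Fin n // ¬ q j} → W) → ℝ),
      ∑ w1 : ({j : Fin n // q j} → W), ∑ w2 : ({j : Fin n // ¬ q j} → W),
          ((∏ j, p (w1 j)) * (∏ j, p (w2 j))) * (k1 w1 * k2 w2)
        = (∑ w1 : ({j : Fin n // q j} → W), (∏ j, p (w1 j)) * k1 w1) *
          (∑ w2 : ({j : Fin n // ¬ q j} → W), (∏ j, p (w2 j)) * k2 w2) := by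
    intro k1 k2
    rw [Finset.sum_mul_sum]
    refine Finset.sum_congr rfl fun w1 _ => Finset.sum_congr rfl fun w2 _ => by ring
  rw [fact, fact, fact]
  have e1 : ∑ w2 : ({j : Fin n // ¬ q j} → W), (∏ j, p (w2 j)) * 1 = 1 := by
    simpa using T2
  have e2 : ∑ w1 : ({j : Fin n // q j} → W), (∏ j, p (w1 j)) * 1 = 1 := by
    simpa using T1
  rw [e1, e2]
  ring

lemma glue_eq {α : Type*} {n : ℕ} (i : Fin n) {x x' : Fin n → α}
    (h1 : past i x = past i x') (h2 : x i = x' i) (h3 : fut i x = fut i x') : x = x' := by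
  funext j
  rcases lt_trichotomy j i with hj | hj | hj
  · exact congrFun h1 ⟨j, hj⟩
  · rw [hj]; exact h2
  · exact congrFun h3 ⟨j, hj⟩

end IID

section MarkovFact
variable {𝒳 𝒴 𝒵 : Type*} [Fintype 𝒳] [Fintype 𝒴] [Fintype 𝒵]
  {p : 𝒳 × 𝒴 × 𝒵 → ℝ} {n : ℕ}

lemma markov_fact (hp : IsPMF p) (i : Fin n)
    (a : 𝒴) (b : {j : Fin n // i < j} → 𝒳)
    (c₁ : 𝒳) (c₂ : {j : Fin n // j < i} → 𝒳) (c₃ : {j : Fin n // i < j} → 𝒴) :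
    probOf (iid p n) (fun w => ((w i).2.1, fut i (fun j => (w j).1),
        ((w i).1, (past i (fun j => (w j).1), fut i (fun j => (w j).2.1)))))
      (a, b, (c₁, (c₂, c₃))) *
    probOf (iid p n) (fun w => ((w i).1, (past i (fun j => (w j).1),
        fut i (fun j => (w j).2.1)))) (c₁, (c₂, c₃))
    = probOf (iid p n) (fun w => ((w i).2.1,
        ((w i).1, (past i (fun j => (w j).1), fut i (fun j => (w j).2.1)))))
        (a, (c₁, (c₂, c₃))) *
      probOf (iid p n) (fun w => (fut i (fun j => (w j).1),
        ((w i).1, (past i (fun j => (w j).1), fut i (fun j => (w j).2.1)))))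
        (b, (c₁, (c₂, c₃))) := by
  classical
  have hii : ¬ i < i := lt_irrefl i
  have hpast : ∀ j : {j : Fin n // j < i}, ¬ i < j.1 := fun j => not_lt.mpr j.2.le
  -- block functions
  set FXY : ({j : Fin n // i < j} → (𝒳 × 𝒴 × 𝒵)) → (({j : Fin n // i < j} → 𝒳) × ({j : Fin n // i < j} → 𝒴)) :=
    fun w1 => (fun j => (w1 j).1, fun j => (w1 j).2.1) with hFXY
  set FY : ({j : Fin n // i < j} → (𝒳 × 𝒴 × 𝒵)) → ({j : Fin n // i < j} → 𝒴) :=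
    fun w1 => fun j => (w1 j).2.1 with hFY
  set GYXP : ({j : Fin n // ¬ i < j} → (𝒳 × 𝒴 × 𝒵)) → (𝒴 × 𝒳 × ({j : Fin n // j < i} → 𝒳)) :=
    fun w2 => ((w2 ⟨i, hii⟩).2.1, (w2 ⟨i, hii⟩).1, fun j => (w2 ⟨j.1, hpast j⟩).1) with hGYXP
  set GXP : ({j : Fin n // ¬ i < j} → (𝒳 × 𝒴 × 𝒵)) → (𝒳 × ({j : Fin n // j < i} → 𝒳)) :=
    fun w2 => ((w2 ⟨i, hii⟩).1, fun j => (w2 ⟨j.1, hpast j⟩).1) with hGXP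
  have e1 : probOf (iid p n) (fun w => ((w i).2.1, fut i (fun j => (w j).1),
        ((w i).1, (past i (fun j => (w j).1), fut i (fun j => (w j).2.1)))))
      (a, b, (c₁, (c₂, c₃)))
      = probOf (iid p n) (fun w => (FXY (fun j => w j.1), GYXP (fun j => w j.1)))
          ((b, c₃), (a, c₁, c₂)) := by
    refine probOf_congr fun w => ?_
    simp only [hFXY, hGYXP, Prod.ext_iff, fut, past]
    tauto
  have e2 : probOf (iid p n) (fun w => ((w i).1, (past i (fun j => (w j).1),
        fut i (fun j => (w j).2.1)))) (c₁, (c₂, c₃))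
      = probOf (iid p n) (fun w => (FY (fun j => w j.1), GXP (fun j => w j.1)))
          (c₃, (c₁, c₂)) := by
    refine probOf_congr fun w => ?_
    simp only [hFY, hGXP, Prod.ext_iff, fut, past]
    tauto
  have e3 : probOf (iid p n) (fun w => ((w i).2.1,
        ((w i).1, (past i (fun j => (w j).1), fut i (fun j => (w j).2.1)))))
        (a, (c₁, (c₂, c₃)))
      = probOf (iid p n) (fun w => (FY (fun j => w j.1), GYXP (fun j => w j.1)))
          (c₃, (a, c₁, c₂)) := by
    refine probOf_congr fun w => ?_
    simp only [hFY, hGYXP, Prod.ext_iff, fut, past]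
    tauto
  have e4 : probOf (iid p n) (fun w => (fut i (fun j => (w j).1),
        ((w i).1, (past i (fun j => (w j).1), fut i (fun j => (w j).2.1)))))
        (b, (c₁, (c₂, c₃)))
      = probOf (iid p n) (fun w => (FXY (fun j => w j.1), GXP (fun j => w j.1)))
          ((b, c₃), (c₁, c₂)) := by
    refine probOf_congr fun w => ?_
    simp only [hFXY, hGXP, Prod.ext_iff, fut, past]
    tauto
  rw [e1, e2, e3, e4, probOf_iid_block hp (fun j => i < j) FXY GYXP,
    probOf_iid_block hp (fun j => i < j) FY GXP,
    probOf_iid_block hp (fun j => i < j) FY GYXP,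
    probOf_iid_block hp (fun j => i < j) FXY GXP]
  ring

end MarkovFact

section Main
variable {𝒳 𝒴 𝒵 : Type*} [Fintype 𝒳] [Fintype 𝒴] [Fintype 𝒵]

lemma step_bound {p : 𝒳 × 𝒴 × 𝒵 → ℝ} (hp : IsPMF p) {n : ℕ}
    {MAR MBR MRA : FinAlph}
    (φAR : (Fin n → 𝒳) → MAR.carrier)
    (φBR : (Fin n → 𝒴) → MBR.carrier)
    (φRA : (Fin n → 𝒵) → MAR.carrier → MBR.carrier → MRA.carrier) (i : Fin n) :
    condMI (iid p n)
        (fun w => (w i).2.1)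
        (fun w => φRA (fun j => (w j).2.2) (φAR fun j => (w j).1) (φBR fun j => (w j).2.1))
        (fun w => ((w i).1,
          (φAR fun j => (w j).1, past i fun j => (w j).1, fut i fun j => (w j).2.1)))
      ≤ condEntropy (iid p n)
          (fun w => φRA (fun j => (w j).2.2) (φAR fun j => (w j).1) (φBR fun j => (w j).2.1))
          (fun w => ((φAR fun j => (w j).1, fun j => (w j).1),
            fun j : {j : Fin n // i.1 + 1 ≤ (j.1 : ℕ)} => (w j.1).2.1))
        - condEntropy (iid p n)
          (fun w => φRA (fun j => (w j).2.2) (φAR fun j => (w j).1) (φBR fun j => (w j).2.1))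
          (fun w => ((φAR fun j => (w j).1, fun j => (w j).1),
            fun j : {j : Fin n // i.1 ≤ (j.1 : ℕ)} => (w j.1).2.1)) := by
  classical
  have hμ : IsPMF (iid p n) := isPMF_iid hp n
  set μ := iid p n with hμdef
  set Yi : (Fin n → 𝒳 × 𝒴 × 𝒵) → 𝒴 := fun w => (w i).2.1 with hYi
  set Mf : (Fin n → 𝒳 × 𝒴 × 𝒵) → MRA.carrier :=
    fun w => φRA (fun j => (w j).2.2) (φAR fun j => (w j).1) (φBR fun j => (w j).2.1) with hMf
  set C : (Fin n → 𝒳 × 𝒴 × 𝒵) →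
      𝒳 × (MAR.carrier × (({j : Fin n // j < i} → 𝒳) × ({j : Fin n // i < j} → 𝒴))) :=
    fun w => ((w i).1,
      (φAR fun j => (w j).1, past i fun j => (w j).1, fut i fun j => (w j).2.1)) with hC
  set K1 : (Fin n → 𝒳 × 𝒴 × 𝒵) →
      (MAR.carrier × (Fin n → 𝒳)) × ({j : Fin n // i.1 + 1 ≤ (j.1 : ℕ)} → 𝒴) :=
    fun w => ((φAR fun j => (w j).1, fun j => (w j).1),
      fun j : {j : Fin n // i.1 + 1 ≤ (j.1 : ℕ)} => (w j.1).2.1) with hK1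
  set K0 : (Fin n → 𝒳 × 𝒴 × 𝒵) →
      (MAR.carrier × (Fin n → 𝒳)) × ({j : Fin n // i.1 ≤ (j.1 : ℕ)} → 𝒴) :=
    fun w => ((φAR fun j => (w j).1, fun j => (w j).1),
      fun j : {j : Fin n // i.1 ≤ (j.1 : ℕ)} => (w j.1).2.1) with hK0
  set Xf : (Fin n → 𝒳 × 𝒴 × 𝒵) → ({j : Fin n // i < j} → 𝒳) :=
    fun w => fut i (fun j => (w j).1) with hXf
  set C' : (Fin n → 𝒳 × 𝒴 × 𝒵) →
      𝒳 × (({j : Fin n // j < i} → 𝒳) × ({j : Fin n // i < j} → 𝒴)) :=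
    fun w => ((w i).1, (past i (fun j => (w j).1), fut i (fun j => (w j).2.1))) with hC'
  set Af : (Fin n → 𝒳 × 𝒴 × 𝒵) → MAR.carrier := fun w => φAR (fun j => (w j).1) with hAf
  -- Step A
  have hA1 : condMI μ Yi Mf C ≤ condMI μ Yi Xf C
      + condMI μ Yi Mf (fun w => (Xf w, C w)) := by
    have t1 := condMI_chain (μ := μ) Yi Xf Mf C
    have t2 := condMI_chain (μ := μ) Yi Mf Xf C
    have t3 : condMI μ Yi (fun w => (Mf w, Xf w)) C
        = condMI μ Yi (fun w => (Xf w, Mf w)) C :=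
      condMI_congr (fun _ _ => Iff.rfl)
        (fun ω ω' => by simp only [Prod.ext_iff]; tauto) (fun _ _ => Iff.rfl)
    have t4 := condMI_nonneg hμ Yi Xf (fun w => (Mf w, C w))
    linarith
  -- Step B : independence
  have hB : condMI μ Yi Xf C = 0 := by
    have m0 : condMI μ Yi Xf C' = 0 := by
      refine condMI_zero_of_markov hμ _ _ _ ?_
      rintro a b ⟨c₁, c₂, c₃⟩
      exact markov_fact hp i a b c₁ c₂ c₃
    have d0 : condMI μ Yi Af (fun w => (Xf w, C' w)) = 0 := by
      refine condMI_zero_of_determined _ _ _ ?_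
      intro ω ω' hh
      simp only [hXf, hC', Prod.ext_iff] at hh
      obtain ⟨hxf, hxi, hpa, _⟩ := hh
      have hx : (fun j => (ω j).1) = (fun j => (ω' j).1) := glue_eq i hpa hxi hxf
      simp only [hAf]
      rw [hx]
    have t5 := condMI_chain (μ := μ) Yi Af Xf C'
    have t6 := condMI_chain (μ := μ) Yi Xf Af C'
    have t7 : condMI μ Yi (fun w => (Af w, Xf w)) C'
        = condMI μ Yi (fun w => (Xf w, Af w)) C' :=
      condMI_congr (fun _ _ => Iff.rfl)
        (fun ω ω' => by simp only [Prod.ext_iff]; tauto) (fun _ _ => Iff.rfl)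
    have t8 := condMI_nonneg hμ Yi Af (fun w => (Xf w, C' w))
    have t9 := condMI_nonneg hμ Yi Xf (fun w => (Af w, C' w))
    have t10 := condMI_nonneg hμ Yi Af C'
    have hXfAC : condMI μ Yi Xf (fun w => (Af w, C' w)) = 0 := by linarith
    have t11 : condMI μ Yi Xf C = condMI μ Yi Xf (fun w => (Af w, C' w)) :=
      condMI_congr (fun _ _ => Iff.rfl) (fun _ _ => Iff.rfl)
        (fun ω ω' => by simp only [hC, hAf, hC', Prod.ext_iff]; tauto)
    rw [t11, hXfAC]
  -- Step C : relabel conditioning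
  have hC1 : condMI μ Yi Mf (fun w => (Xf w, C w)) = condMI μ Yi Mf
      (fun w => ((Af w, fun j => (w j).1), fut i fun j => (w j).2.1)) := by
    refine condMI_congr (fun _ _ => Iff.rfl) (fun _ _ => Iff.rfl) ?_
    intro ω ω'
    simp only [hXf, hC, hAf, Prod.ext_iff]
    constructor
    · rintro ⟨hxf, hxi, hA2, hpa, hfy⟩
      exact ⟨⟨hA2, glue_eq i hpa hxi hxf⟩, hfy⟩
    · rintro ⟨⟨hA2, hX⟩, hfy⟩
      exact ⟨congrArg (fut i) hX, congrFun hX i, hA2, congrArg (past i) hX, hfy⟩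
  -- Step D : difference of conditional entropies
  have hD : condMI μ Yi Mf
      (fun w => ((Af w, fun j => (w j).1), fut i fun j => (w j).2.1))
      = condEntropy μ Mf K1 - condEntropy μ Mf K0 := by
    rw [condMI_eq_diff]
    have hKa : condEntropy μ Mf
        (fun w => ((Af w, fun j => (w j).1), fut i fun j => (w j).2.1))
        = condEntropy μ Mf K1 := by
      refine condEntropy_congr ?_
      intro ω ω'
      simp only [hAf, hK1, Prod.ext_iff]
      constructor
      · rintro ⟨hAX, hf⟩
        refine ⟨hAX, funext fun j => ?_⟩
        have hj : i < j.1 := by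
          rw [Fin.lt_def]; omega
        exact congrFun hf ⟨j.1, hj⟩
      · rintro ⟨hAX, hf⟩
        refine ⟨hAX, funext fun j => ?_⟩
        have hj : i.1 + 1 ≤ (j.1 : ℕ) := by
          have := j.2; rw [Fin.lt_def] at this; omega
        exact congrFun hf ⟨j.1, hj⟩
    have hKb : condEntropy μ Mf
        (fun w => (Yi w, ((Af w, fun j => (w j).1), fut i fun j => (w j).2.1)))
        = condEntropy μ Mf K0 := by
      refine condEntropy_congr ?_
      intro ω ω'
      simp only [hAf, hYi, hK0, Prod.ext_iff]
      constructor
      · rintro ⟨hyi, hAX, hf⟩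
        refine ⟨hAX, funext fun j => ?_⟩
        by_cases hji : j.1 = i
        · rw [hji]; exact hyi
        · have hj : i < j.1 := by
            rw [Fin.lt_def]
            have h2 := j.2
            have : (j.1 : ℕ) ≠ (i : ℕ) := fun hc => hji (Fin.ext hc)
            omega
          exact congrFun hf ⟨j.1, hj⟩
      · rintro ⟨hAX, hf⟩
        refine ⟨congrFun hf ⟨i, le_refl _⟩, hAX, funext fun j => ?_⟩
        have hj : i.1 ≤ (j.1 : ℕ) := by
          have := j.2; rw [Fin.lt_def] at this; omega
        exact congrFun hf ⟨j.1, hj⟩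
    rw [hKa, hKb]
  linarith


end Main
end Extra

/-- **Single-letterization of the delivery-stage rate (converse step for `R_RA`).**
With `M_AR = φ_AR(X^n)`, `M_BR = φ_BR(Y^n)`, `M_RA = φ_RA(Z^n, M_AR, M_BR)`,
`U_{1,i} = (M_AR, X^{i-1}, Y_{i+1}^n)` and `V_{2,i} = M_RA`,
`∑ᵢ I(Y_i; M_RA | X_i, U_{1,i}) ≤ H(M_RA | M_AR, X^n) ≤ log₂|ℳ_RA|`;
in particular if `|ℳ_RA| ≤ 2^{n R_RA}` then `∑ᵢ I(Y_i; V_{2,i} | X_i, U_{1,i}) ≤ n R_RA`. -/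
theorem dsc_rate_single_letterization_RA
    {𝒳 𝒴 𝒵 : Type*} [Fintype 𝒳] [Fintype 𝒴] [Fintype 𝒵]
    (p : 𝒳 × 𝒴 × 𝒵 → ℝ) (hp : IsPMF p) (n : ℕ)
    (MAR MBR MRA : FinAlph)
    (φAR : (Fin n → 𝒳) → MAR.carrier)
    (φBR : (Fin n → 𝒴) → MBR.carrier)
    (φRA : (Fin n → 𝒵) → MAR.carrier → MBR.carrier → MRA.carrier) :
    -- ∑ᵢ I(Y_i; M_RA | X_i, U_{1,i}) ≤ H(M_RA | M_AR, X^n)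
    (∑ i : Fin n, condMI (iid p n)
        (fun w => (w i).2.1)
        (fun w => φRA (fun j => (w j).2.2) (φAR fun j => (w j).1) (φBR fun j => (w j).2.1))
        (fun w => ((w i).1,
          (φAR fun j => (w j).1, past i fun j => (w j).1, fut i fun j => (w j).2.1)))
      ≤ condEntropy (iid p n)
          (fun w => φRA (fun j => (w j).2.2) (φAR fun j => (w j).1) (φBR fun j => (w j).2.1))
          (fun w => (φAR fun j => (w j).1, fun j => (w j).1))) ∧
    -- H(M_RA | M_AR, X^n) ≤ log₂ |ℳ_RA|
    (condEntropy (iid p n)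
        (fun w => φRA (fun j => (w j).2.2) (φAR fun j => (w j).1) (φBR fun j => (w j).2.1))
        (fun w => (φAR fun j => (w j).1, fun j => (w j).1))
      ≤ Real.logb 2 (Fintype.card MRA.carrier)) ∧
    -- in particular, if |ℳ_RA| ≤ 2^{n R_RA} then ∑ᵢ I(Y_i; V_{2,i} | X_i, U_{1,i}) ≤ n R_RA
    (∀ RRA : ℝ, (Fintype.card MRA.carrier : ℝ) ≤ (2 : ℝ) ^ ((n : ℝ) * RRA) →
      ∑ i : Fin n, condMI (iid p n)
        (fun w => (w i).2.1)
        (fun w => φRA (fun j => (w j).2.2) (φAR fun j => (w j).1) (φBR fun j => (w j).2.1))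
        (fun w => ((w i).1,
          (φAR fun j => (w j).1, past i fun j => (w j).1, fut i fun j => (w j).2.1)))
        ≤ (n : ℝ) * RRA) := by
  classical
  have hμ : IsPMF (iid p n) := isPMF_iid hp n
  have hW : Nonempty (𝒳 × 𝒴 × 𝒵) := by
    by_contra hc
    haveI := not_nonempty_iff.mp hc
    have h2 := hp.2
    rw [Finset.univ_eq_empty, Finset.sum_empty] at h2
    exact one_ne_zero h2.symm
  haveI hΩ : Nonempty (Fin n → 𝒳 × 𝒴 × 𝒵) := ⟨fun _ => Classical.arbitrary _⟩
  haveI hMRAne : Nonempty MRA.carrier :=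
    ⟨φRA (fun j => ((Classical.arbitrary (Fin n → 𝒳 × 𝒴 × 𝒵)) j).2.2)
      (φAR fun j => ((Classical.arbitrary (Fin n → 𝒳 × 𝒴 × 𝒵)) j).1)
      (φBR fun j => ((Classical.arbitrary (Fin n → 𝒳 × 𝒴 × 𝒵)) j).2.1)⟩
  let F : ℕ → ℝ := fun k => condEntropy (iid p n)
      (fun w => φRA (fun j => (w j).2.2) (φAR fun j => (w j).1) (φBR fun j => (w j).2.1))
      (fun w => ((φAR fun j => (w j).1, fun j => (w j).1),
        fun j : {j : Fin n // k ≤ (j.1 : ℕ)} => (w j.1).2.1))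
  have hFn : F n = condEntropy (iid p n)
      (fun w => φRA (fun j => (w j).2.2) (φAR fun j => (w j).1) (φBR fun j => (w j).2.1))
      (fun w => (φAR fun j => (w j).1, fun j => (w j).1)) := by
    refine condEntropy_congr ?_
    intro ω ω'
    simp only [Prod.ext_iff]
    constructor
    · rintro ⟨hAX, _⟩; exact hAX
    · intro hAX
      refine ⟨hAX, funext fun j => ?_⟩
      exact absurd j.2 (by have := j.1.isLt; omega)
  have hF0 : 0 ≤ F 0 := condEntropy_nonneg hμ.1 _ _
  have hpart1 : ∑ i : Fin n, condMI (iid p n)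
        (fun w => (w i).2.1)
        (fun w => φRA (fun j => (w j).2.2) (φAR fun j => (w j).1) (φBR fun j => (w j).2.1))
        (fun w => ((w i).1,
          (φAR fun j => (w j).1, past i fun j => (w j).1, fut i fun j => (w j).2.1)))
      ≤ condEntropy (iid p n)
          (fun w => φRA (fun j => (w j).2.2) (φAR fun j => (w j).1) (φBR fun j => (w j).2.1))
          (fun w => (φAR fun j => (w j).1, fun j => (w j).1)) := by
    have h1 : ∑ i : Fin n, condMI (iid p n)
        (fun w => (w i).2.1)
        (fun w => φRA (fun j => (w j).2.2) (φAR fun j => (w j).1) (φBR fun j => (w j).2.1))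
        (fun w => ((w i).1,
          (φAR fun j => (w j).1, past i fun j => (w j).1, fut i fun j => (w j).2.1)))
        ≤ ∑ i : Fin n, (F (i.1 + 1) - F i.1) :=
      Finset.sum_le_sum fun i _ => step_bound hp φAR φBR φRA i
    have h2 : ∑ i : Fin n, (F (i.1 + 1) - F i.1) = F n - F 0 := by
      rw [Fin.sum_univ_eq_sum_range (fun k => F (k + 1) - F k) n]
      exact Finset.sum_range_sub F n
    rw [h2] at h1
    rw [← hFn]
    linarith
  have hpart2 : condEntropy (iid p n)
      (fun w => φRA (fun j => (w j).2.2) (φAR fun j => (w j).1) (φBR fun j => (w j).2.1))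
      (fun w => (φAR fun j => (w j).1, fun j => (w j).1))
      ≤ Real.logb 2 (Fintype.card MRA.carrier) :=
    (condEntropy_le_entropy hμ _ _).trans (entropy_le_logb_card hμ _)
  refine ⟨hpart1, hpart2, ?_⟩
  intro RRA hcard
  have hcard1 : (0:ℝ) < Fintype.card MRA.carrier := by
    have := Fintype.card_pos (α := MRA.carrier)
    exact_mod_cast this
  have hlogb : Real.logb 2 (Fintype.card MRA.carrier) ≤ (n : ℝ) * RRA := by
    have h := Real.logb_le_logb_of_le one_lt_two hcard1 hcard
    rwa [Real.logb_rpow (by norm_num) (by norm_num)] at h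
  linarith

end IRSC
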